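/- arXiv:1608.06890 — 2 statements merged into one kernel-verified Lean document; each statement's English description precedes it below -/
import Mathlib

section
/- For every 0 < α < 1, the function φ on ℂ \ {0,1} defined by φ(x) = |x-1|^{-2α} · |x/|x| - 1|² satisfies φ(x) ≤ 4 for all x in its domain. -/
theorem stmt_1 (α : ℝ) (hα : 0 < α) (hα1 : α < 1) (x : ℂ) (hx0 : x ≠ 0) (hx1 : x ≠ 1) :
    ‖x - 1‖ ^ (-(2 * α)) * ‖x / (‖x‖ : ℂ) - 1‖ ^ 2 ≤ 4 := by
  set r := ‖x - 1‖ with hr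
  have hrpos : 0 < r := by
    simpa [hr] using (norm_pos_iff.mpr (sub_ne_zero.mpr hx1))
  have habs : (0:ℝ) < ‖x‖ := norm_pos_iff.mpr hx0
  set t := ‖x / (‖x‖ : ℂ) - 1‖ with ht
  have htnn : 0 ≤ t := norm_nonneg _
  have h2 : ‖x / (‖x‖ : ℂ) - x‖ = |1 - ‖x‖| := by
    have heq : x / (‖x‖ : ℂ) - x
        = x * ((1 - (‖x‖ : ℂ)) / (‖x‖ : ℂ)) := by
      have hne : (‖x‖ : ℂ) ≠ 0 := by exact_mod_cast ne_of_gt habs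
      field_simp
    rw [heq, norm_mul, norm_div, Complex.norm_real, Real.norm_eq_abs, abs_of_pos habs,
      show (1 : ℂ) - (‖x‖ : ℂ) = ((1 - ‖x‖ : ℝ) : ℂ) by push_cast; ring,
      Complex.norm_real, Real.norm_eq_abs]
    field_simp
  have h3 : |1 - ‖x‖| ≤ r := by
    have := abs_norm_sub_norm_le x 1
    simpa [abs_sub_comm, hr] using this
  have ht2r : t ≤ 2 * r := by
    have h1 : t ≤ ‖x / (‖x‖ : ℂ) - x‖ + ‖x - 1‖ := by
      exact norm_sub_le_norm_sub_add_norm_sub (x / (‖x‖ : ℂ)) x 1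
    rw [h2] at h1
    linarith
  have ht2 : t ≤ 2 := by
    have h1 : t ≤ ‖x / (‖x‖ : ℂ)‖ + ‖(1 : ℂ)‖ := by
      exact norm_sub_le (x / (‖x‖ : ℂ)) 1
    have h2' : ‖x / (‖x‖ : ℂ)‖ = 1 := by
      rw [norm_div, Complex.norm_real, Real.norm_eq_abs, abs_of_pos habs, div_self (ne_of_gt habs)]
    rw [h2'] at h1
    norm_num at h1
    linarith
  rcases le_or_gt r 1 with hle | hgt
  · -- r ≤ 1 : use t ≤ 2r
    have hsq : t ^ 2 ≤ 4 * r ^ 2 := by nlinarith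
    have key : r ^ (-(2 * α)) * t ^ 2 ≤ 4 * r ^ (2 - 2 * α) := by
      have : r ^ (-(2 * α)) * (4 * r ^ 2) = 4 * r ^ (2 - 2 * α) := by
        rw [show (r : ℝ) ^ 2 = r ^ (2 : ℝ) by rw [← Real.rpow_natCast r 2]; norm_num,
          ← mul_assoc, mul_comm (r ^ (-(2 * α))) 4, mul_assoc,
          ← Real.rpow_add hrpos]
        ring_nf
      calc r ^ (-(2 * α)) * t ^ 2 ≤ r ^ (-(2 * α)) * (4 * r ^ 2) := by
            apply mul_le_mul_of_nonneg_left hsq (Real.rpow_nonneg hrpos.le _)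
        _ = 4 * r ^ (2 - 2 * α) := this
    have hlast : r ^ (2 - 2 * α) ≤ 1 :=
      Real.rpow_le_one hrpos.le hle (by linarith)
    linarith
  · -- r > 1 : r^{-2α} ≤ 1 and t ≤ 2
    have h1 : r ^ (-(2 * α)) ≤ 1 :=
      Real.rpow_le_one_of_one_le_of_nonpos hgt.le (by linarith)
    have h2' : t ^ 2 ≤ 4 := by nlinarith
    have := mul_le_mul h1 h2' (by positivity) (by norm_num)
    linarith
end

section
/- Let 0 < α, β < 1 and let f̃ : ℂ → ℂ be α-Hölder continuous with constant C. Define h(z) = |z|^{2β-2}(f̃(|z|^{β-1}z) - f̃(0)) for z ≠ 0. Then for any z with 0 < |z| < 1/6 and any x, y in the disc B' of center z and radius |z|/2, one has |h(x) - h(y)| ≤ C'|z|^{2β-2+αβ} for a constant C' depending only on C, α, β. -/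
theorem stmt_11 (α β C : ℝ) (hα : 0 < α) (hα1 : α < 1) (hβ : 0 < β) (hβ1 : β < 1)
    (hC : 0 ≤ C) (f : ℂ → ℂ)
    (hf : ∀ x y : ℂ, ‖f x - f y‖ ≤ C * dist x y ^ α) :
    ∃ C' : ℝ, ∀ z : ℂ, 0 < ‖z‖ → ‖z‖ < 1 / 6 →
      ∀ x ∈ Metric.closedBall z (‖z‖ / 2),
        ∀ y ∈ Metric.closedBall z (‖z‖ / 2),
          ‖((‖x‖ ^ (2 * β - 2) : ℝ) : ℂ) *
                (f (((‖x‖ ^ (β - 1) : ℝ) : ℂ) * x) - f 0) -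
              ((‖y‖ ^ (2 * β - 2) : ℝ) : ℂ) *
                (f (((‖y‖ ^ (β - 1) : ℝ) : ℂ) * y) - f 0)‖ ≤
            C' * ‖z‖ ^ (2 * β - 2 + α * β) := by
  set e : ℝ := 2 * β - 2 + α * β with he
  set K : ℝ := (2 : ℝ) ^ |e| * (3 / 2 : ℝ) ^ |e| with hK
  have hK1 : (1 : ℝ) ≤ (2 : ℝ) ^ |e| := Real.one_le_rpow (by norm_num) (abs_nonneg e)
  have hK2 : (1 : ℝ) ≤ (3 / 2 : ℝ) ^ |e| := Real.one_le_rpow (by norm_num) (abs_nonneg e)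
  refine ⟨2 * C * K, ?_⟩
  intro z hz hz6 x hx y hy
  have hzK : 0 ≤ ‖z‖ ^ e := Real.rpow_nonneg (norm_nonneg z) e
  -- key pointwise bound
  have key : ∀ w : ℂ, ‖z‖ / 2 ≤ ‖w‖ →
      ‖w‖ ≤ 3 * ‖z‖ / 2 →
      ‖((‖w‖ ^ (2 * β - 2) : ℝ) : ℂ) *
          (f (((‖w‖ ^ (β - 1) : ℝ) : ℂ) * w) - f 0)‖ ≤
        C * K * ‖z‖ ^ e := by
    intro w hw1 hw2
    have hw0 : 0 < ‖w‖ := lt_of_lt_of_le (by linarith) hw1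
    have hdist : dist (((‖w‖ ^ (β - 1) : ℝ) : ℂ) * w) 0 = ‖w‖ ^ β := by
      rw [Complex.dist_eq, sub_zero, norm_mul, Complex.norm_real, Real.norm_eq_abs,
        abs_of_nonneg (Real.rpow_nonneg (norm_nonneg w) _)]
      nth_rewrite 2 [show ‖w‖ = ‖w‖ ^ (1 : ℝ) by rw [Real.rpow_one]]
      rw [← Real.rpow_add hw0]
      ring_nf
    have hfb : ‖f (((‖w‖ ^ (β - 1) : ℝ) : ℂ) * w) - f 0‖ ≤
        C * ‖w‖ ^ (β * α) := by
      calc ‖f (((‖w‖ ^ (β - 1) : ℝ) : ℂ) * w) - f 0‖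
          ≤ C * dist (((‖w‖ ^ (β - 1) : ℝ) : ℂ) * w) 0 ^ α := hf _ _
        _ = C * ‖w‖ ^ (β * α) := by
            rw [hdist, ← Real.rpow_mul (norm_nonneg w)]
    have hnorm : ‖((‖w‖ ^ (2 * β - 2) : ℝ) : ℂ) *
        (f (((‖w‖ ^ (β - 1) : ℝ) : ℂ) * w) - f 0)‖ =
        ‖w‖ ^ (2 * β - 2) * ‖f (((‖w‖ ^ (β - 1) : ℝ) : ℂ) * w) - f 0‖ := by
      rw [norm_mul, Complex.norm_real, Real.norm_eq_abs,
        abs_of_nonneg (Real.rpow_nonneg (norm_nonneg w) _)]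
    rw [hnorm]
    have h1 : ‖w‖ ^ (2 * β - 2) *
        ‖f (((‖w‖ ^ (β - 1) : ℝ) : ℂ) * w) - f 0‖ ≤
        ‖w‖ ^ (2 * β - 2) * (C * ‖w‖ ^ (β * α)) :=
      mul_le_mul_of_nonneg_left hfb (Real.rpow_nonneg (norm_nonneg w) _)
    have h2 : ‖w‖ ^ (2 * β - 2) * (C * ‖w‖ ^ (β * α)) =
        C * ‖w‖ ^ e := by
      rw [he, show 2 * β - 2 + α * β = (2 * β - 2) + β * α by ring,
        Real.rpow_add hw0]
      ring
    rw [h2] at h1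
    refine h1.trans ?_
    have hwz : ‖w‖ ^ e ≤ K * ‖z‖ ^ e := by
      rcases le_or_gt 0 e with hep | hen
      · have : ‖w‖ ^ e ≤ (3 * ‖z‖ / 2) ^ e :=
          Real.rpow_le_rpow (norm_nonneg w) hw2 hep
        refine this.trans ?_
        have : (3 * ‖z‖ / 2) ^ e = (3 / 2 : ℝ) ^ e * ‖z‖ ^ e := by
          rw [show 3 * ‖z‖ / 2 = (3 / 2 : ℝ) * ‖z‖ by ring,
            Real.mul_rpow (by norm_num) (norm_nonneg z)]
        rw [this]
        have h32 : (3 / 2 : ℝ) ^ e ≤ K := by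
          rw [hK, abs_of_nonneg hep]
          nlinarith [Real.rpow_nonneg (show (0:ℝ) ≤ 3/2 by norm_num) e,
            Real.one_le_rpow (show (1:ℝ) ≤ 2 by norm_num) hep]
        exact mul_le_mul_of_nonneg_right h32 hzK
      · have hz2 : 0 < ‖z‖ / 2 := by linarith
        have : ‖w‖ ^ e ≤ (‖z‖ / 2) ^ e :=
          Real.rpow_le_rpow_of_nonpos hz2 hw1 hen.le
        refine this.trans ?_
        have hdiv : (‖z‖ / 2) ^ e = ‖z‖ ^ e / (2 : ℝ) ^ e := by
          rw [Real.div_rpow (norm_nonneg z) (by norm_num)]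
        rw [hdiv]
        have h2e : (2 : ℝ) ^ e = ((2 : ℝ) ^ |e|)⁻¹ := by
          rw [abs_of_neg hen, ← Real.rpow_neg (by norm_num), neg_neg]
        rw [h2e, div_eq_mul_inv, inv_inv, hK]
        nlinarith [mul_nonneg (mul_nonneg hzK (le_trans zero_le_one hK1)) (sub_nonneg.mpr hK2)]
    calc C * ‖w‖ ^ e ≤ C * (K * ‖z‖ ^ e) :=
          mul_le_mul_of_nonneg_left hwz hC
      _ = C * K * ‖z‖ ^ e := by ring
  -- bounds on x and y
  have hbnd : ∀ w : ℂ, w ∈ Metric.closedBall z (‖z‖ / 2) →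
      ‖z‖ / 2 ≤ ‖w‖ ∧ ‖w‖ ≤ 3 * ‖z‖ / 2 := by
    intro w hw
    rw [Metric.mem_closedBall, Complex.dist_eq] at hw
    have h1 : ‖w - z‖ ≤ ‖z‖ / 2 := hw
    have h2 : ‖z‖ - ‖w‖ ≤ ‖w - z‖ := by
      have := norm_sub_norm_le z w
      rwa [norm_sub_rev z w] at this
    have h3 : ‖w‖ - ‖z‖ ≤ ‖w - z‖ :=
      norm_sub_norm_le w z
    constructor <;> linarith
  obtain ⟨hx1, hx2⟩ := hbnd x hx
  obtain ⟨hy1, hy2⟩ := hbnd y hy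
  calc ‖((‖x‖ ^ (2 * β - 2) : ℝ) : ℂ) *
          (f (((‖x‖ ^ (β - 1) : ℝ) : ℂ) * x) - f 0) -
        ((‖y‖ ^ (2 * β - 2) : ℝ) : ℂ) *
          (f (((‖y‖ ^ (β - 1) : ℝ) : ℂ) * y) - f 0)‖
      ≤ ‖((‖x‖ ^ (2 * β - 2) : ℝ) : ℂ) *
          (f (((‖x‖ ^ (β - 1) : ℝ) : ℂ) * x) - f 0)‖ +
        ‖((‖y‖ ^ (2 * β - 2) : ℝ) : ℂ) *
          (f (((‖y‖ ^ (β - 1) : ℝ) : ℂ) * y) - f 0)‖ := norm_sub_le _ _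
    _ ≤ C * K * ‖z‖ ^ e + C * K * ‖z‖ ^ e :=
        add_le_add (key x hx1 hx2) (key y hy1 hy2)
    _ = 2 * C * K * ‖z‖ ^ e := by ring
end
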